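/- (At most one zero of the first Melnikov function bifurcates from the figure-eight.) There exists δ > 0 such that for all real numbers λ₁, λ₄ with (λ₁, λ₄) ≠ (0, 0), the function h ↦ λ₁·I_0(h) + λ₄·I_2(h) has at most one zero in the interval (0, δ); that is, the set {h ∈ (0, δ) : λ₁·I_0(h) + λ₄·I_2(h) = 0} contains at most one point. -/

import Mathlib

open Real Set Filter intervalIntegral

/-- Right endpoint of the exterior oval: `x_max(h) = √(1 + √(1+4h))`. -/
noncomputable def xmax (h : ℝ) : ℝ := Real.sqrt (1 + Real.sqrt (1 + 4*h))

/-- Complete elliptic integral `I_i(h) = ∫_{-x_max}^{x_max} x^i √(2h + x² - x⁴/2) dx`. -/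
noncomputable def ellI (i : ℕ) (h : ℝ) : ℝ :=
  ∫ x in (-xmax h)..(xmax h), x^i * Real.sqrt (2*h + x^2 - x^4/2)

/-- Complete elliptic integral `I'_i(h) = ∫_{-x_max}^{x_max} x^i (2h + x² - x⁴/2)^{-1/2} dx`. -/
noncomputable def ellI' (i : ℕ) (h : ℝ) : ℝ :=
  ∫ x in (-xmax h)..(xmax h), x^i / Real.sqrt (2*h + x^2 - x^4/2)

/-! ### Auxiliary development

We substitute `x = √m · t` with `m = 1 + √(1+4h)` (so that `x_max h = √m` and
`2h = m²/2 - m`).  This turns `ellI i h` into `m^{(i+2)/2} · A i m`, where `A i m` is an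
integral over the fixed interval `[-1, 1]` whose integrand is smooth in `m` for `m > 2`. -/

open MeasureTheory Metric

noncomputable def qq (m t : ℝ) : ℝ := (1 - t^2) * (m * ((1+t^2)/2) - 1)

noncomputable def A (i : ℕ) (m : ℝ) : ℝ := ∫ t in (-1:ℝ)..1, t^i * Real.sqrt (qq m t)

noncomputable def dA (i : ℕ) (m : ℝ) : ℝ :=
  ∫ t in (-1:ℝ)..1, t^i * (1 / (2 * Real.sqrt (qq m t)) * ((1 - t^2) * ((1+t^2)/2)))

lemma qq_cont (m : ℝ) : Continuous (fun t => qq m t) := by unfold qq; continuity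

lemma A_integrand_cont (i : ℕ) (m : ℝ) :
    Continuous (fun t => t^i * Real.sqrt (qq m t)) :=
  (continuous_pow i).mul ((qq_cont m).sqrt)

lemma sqrt2_le : Real.sqrt 2 ≤ 1.5 := by
  nlinarith [Real.sq_sqrt (by norm_num : (0:ℝ) ≤ 2), Real.sqrt_nonneg 2]

lemma qq_pos {m t : ℝ} (hm : 2 < m) (ht1 : -1 < t) (ht2 : t < 1) : 0 < qq m t := by
  have h1 : t^2 < 1 := by nlinarith
  have : (0:ℝ) < m * ((1+t^2)/2) - 1 := by nlinarith
  unfold qq; nlinarith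

lemma ae_ne_pm : ∀ᵐ t : ℝ ∂volume, t ≠ (-1:ℝ) ∧ t ≠ (1:ℝ) := by
  have h1 : ∀ᵐ t : ℝ ∂volume, t ≠ (-1:ℝ) := by
    rw [MeasureTheory.ae_iff]
    have : {t : ℝ | ¬ t ≠ (-1:ℝ)} = {(-1:ℝ)} := by ext t; simp
    rw [this]; exact measure_singleton _
  have h2 : ∀ᵐ t : ℝ ∂volume, t ≠ (1:ℝ) := by
    rw [MeasureTheory.ae_iff]
    have : {t : ℝ | ¬ t ≠ (1:ℝ)} = {(1:ℝ)} := by ext t; simp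
    rw [this]; exact measure_singleton _
  exact h1.and h2

lemma dA_integrand_meas (i : ℕ) (m : ℝ) :
    Measurable (fun t : ℝ => t^i * (1 / (2 * Real.sqrt (qq m t)) * ((1 - t^2) * ((1+t^2)/2)))) := by
  have h1 : Measurable (fun t : ℝ => (2 * Real.sqrt (qq m t))⁻¹) :=
    ((continuous_const.mul (qq_cont m).sqrt).measurable).inv
  have h2 : Measurable (fun t : ℝ => 1 / (2 * Real.sqrt (qq m t))) := by
    simpa [one_div] using h1
  exact (measurable_id.pow_const i).mul
    (h2.mul ((measurable_const.sub (measurable_id.pow_const 2)).mul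
      (((measurable_const.add (measurable_id.pow_const 2))).div_const 2)))

lemma hasDerivAt_A (i : ℕ) {m : ℝ} (hm : 2 < m) :
    HasDerivAt (A i) (dA i m) m ∧
    IntervalIntegrable (fun t : ℝ => t^i * (1 / (2 * Real.sqrt (qq m t)) * ((1 - t^2) * ((1+t^2)/2))))
      volume (-1) 1 := by
  have hε : (0:ℝ) < (m - 2)/2 := by linarith
  have hκ : (0:ℝ) < (m-2)/4 := by linarith
  set κ := (m-2)/4 with hκdef
  have hsκ : 0 < Real.sqrt κ := Real.sqrt_pos.mpr hκ
  have key := intervalIntegral.hasDerivAt_integral_of_dominated_loc_of_deriv_le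
    (F := fun m t => t^i * Real.sqrt (qq m t))
    (F' := fun m t => t^i * (1 / (2 * Real.sqrt (qq m t)) * ((1 - t^2) * ((1+t^2)/2))))
    (x₀ := m) (a := (-1:ℝ)) (b := 1) (μ := volume)
    (bound := fun _ => 1 / (2 * Real.sqrt κ))
    (ball_mem_nhds m hε) ?_ ?_ ?_ ?_ ?_ ?_
  · exact ⟨key.2, key.1⟩
  · filter_upwards with x using ((A_integrand_cont i x).aestronglyMeasurable).restrict
  · exact (A_integrand_cont i m).intervalIntegrable _ _
  · exact ((dA_integrand_meas i m).aestronglyMeasurable).restrict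
  · -- bound
    filter_upwards [ae_ne_pm] with t ht htI m' hm'
    have htm : t ∈ Set.Ioc (-1:ℝ) 1 := by simpa [Set.uIoc_of_le (by norm_num : (-1:ℝ) ≤ 1)] using htI
    have ht1 : -1 < t := htm.1
    have ht2 : t < 1 := lt_of_le_of_ne htm.2 ht.2
    have htsq : t^2 < 1 := by nlinarith
    have hm'2 : 2 < m' := by
      have := abs_lt.mp (mem_ball_iff_norm.mp hm')
      have : m - (m-2)/2 < m' := by linarith [this.1]
      linarith
    have hfac : κ ≤ m' * ((1+t^2)/2) - 1 := by
      nlinarith [mem_ball_iff_norm.mp hm', abs_lt.mp (mem_ball_iff_norm.mp hm')]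
    set s := Real.sqrt (1 - t^2) with hsdef
    have hs_pos : 0 < s := Real.sqrt_pos.mpr (by nlinarith)
    have hs_le : s ≤ 1 := by
      have := Real.sqrt_le_sqrt (show 1 - t^2 ≤ 1 by nlinarith)
      simpa [hsdef] using this
    have hssq : s^2 = 1 - t^2 := Real.sq_sqrt (by nlinarith)
    have hq_ge : s * Real.sqrt κ ≤ Real.sqrt (qq m' t) := by
      rw [hsdef, ← Real.sqrt_mul (by nlinarith) κ]
      exact Real.sqrt_le_sqrt (by unfold qq; nlinarith)
    have hq_pos : 0 < Real.sqrt (qq m' t) := lt_of_lt_of_le (mul_pos hs_pos hsκ) hq_ge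
    rw [Real.norm_eq_abs, abs_mul]
    have hXnn : 0 ≤ 1 / (2 * Real.sqrt (qq m' t)) * ((1 - t^2) * ((1+t^2)/2)) :=
      mul_nonneg (by positivity) (mul_nonneg (by nlinarith) (by positivity))
    rw [abs_of_nonneg hXnn]
    have hti : |t^i| ≤ 1 := by
      rw [abs_pow]; exact pow_le_one₀ (abs_nonneg t) (abs_le.mpr ⟨le_of_lt ht1, le_of_lt ht2⟩)
    calc |t^i| * (1 / (2 * Real.sqrt (qq m' t)) * ((1 - t^2) * ((1+t^2)/2)))
        ≤ 1 * (1 / (2 * Real.sqrt (qq m' t)) * ((1 - t^2) * ((1+t^2)/2))) := by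
          exact mul_le_mul_of_nonneg_right hti hXnn
      _ ≤ 1 / (2 * Real.sqrt κ) := by
          rw [one_mul]
          have h5 : 1 / (2 * Real.sqrt (qq m' t)) ≤ 1 / (2 * (s * Real.sqrt κ)) :=
            one_div_le_one_div_of_le (by positivity) (by linarith)
          have h6 : 1 / (2 * (s * Real.sqrt κ)) * ((1 - t^2) * ((1+t^2)/2))
              = (s * ((1+t^2)/2)) * (1 / (2 * Real.sqrt κ)) := by
            rw [← hssq]; field_simp
          calc 1 / (2 * Real.sqrt (qq m' t)) * ((1 - t^2) * ((1+t^2)/2))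
              ≤ 1 / (2 * (s * Real.sqrt κ)) * ((1 - t^2) * ((1+t^2)/2)) := by
                apply mul_le_mul_of_nonneg_right h5 (by nlinarith)
            _ = (s * ((1+t^2)/2)) * (1 / (2 * Real.sqrt κ)) := h6
            _ ≤ 1 * (1 / (2 * Real.sqrt κ)) := by
                apply mul_le_mul_of_nonneg_right _ (by positivity)
                nlinarith
            _ = 1 / (2 * Real.sqrt κ) := one_mul _
  · exact _root_.intervalIntegrable_const
  · -- differentiability
    filter_upwards [ae_ne_pm] with t ht htI m' hm'
    have htm : t ∈ Set.Ioc (-1:ℝ) 1 := by simpa [Set.uIoc_of_le (by norm_num : (-1:ℝ) ≤ 1)] using htI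
    have ht1 : -1 < t := htm.1
    have ht2 : t < 1 := lt_of_le_of_ne htm.2 ht.2
    have hm'2 : 2 < m' := by
      have := abs_lt.mp (mem_ball_iff_norm.mp hm')
      linarith [this.1]
    have hqpos := qq_pos hm'2 ht1 ht2
    have hu : HasDerivAt (fun m'' : ℝ => qq m'' t) ((1 - t^2) * ((1+t^2)/2)) m' := by
      have : HasDerivAt (fun m'' : ℝ => (1 - t^2) * (m'' * ((1+t^2)/2) - 1))
          ((1 - t^2) * (1 * ((1+t^2)/2))) m' :=
        (((hasDerivAt_id m').mul_const ((1+t^2)/2)).sub_const 1).const_mul (1-t^2)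
      simpa [qq] using this
    have hsq := (Real.hasDerivAt_sqrt (ne_of_gt hqpos)).comp m' hu
    simpa [Function.comp, mul_comm, mul_assoc, mul_left_comm] using hsq.const_mul (t^i)
-- upper bound for A
lemma A_upper (i : ℕ) {m : ℝ} (hm2 : 2 ≤ m) (hm3 : m ≤ 3) : A i m ≤ 4 := by
  have hint : IntervalIntegrable (fun t => t^i * Real.sqrt (qq m t)) volume (-1) 1 :=
    (A_integrand_cont i m).intervalIntegrable _ _
  have := intervalIntegral.integral_mono_on (a := (-1:ℝ)) (b := 1) (by norm_num)
    hint (_root_.intervalIntegrable_const (c := (2:ℝ)))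
    (fun t ht => by
      have ht1 : -1 ≤ t := ht.1
      have ht2 : t ≤ 1 := ht.2
      have hq1 : qq m t ≤ 2 := by
        unfold qq; nlinarith [sq_nonneg t, sq_nonneg (t^2)]
      have h2 : Real.sqrt (qq m t) ≤ 2 := by
        calc Real.sqrt (qq m t) ≤ Real.sqrt 2 := Real.sqrt_le_sqrt hq1
          _ ≤ 2 := by nlinarith [sqrt2_le]
      calc t^i * Real.sqrt (qq m t) ≤ |t^i * Real.sqrt (qq m t)| := le_abs_self _
        _ = |t|^i * Real.sqrt (qq m t) := by
            rw [abs_mul, abs_pow, abs_of_nonneg (Real.sqrt_nonneg _)]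
        _ ≤ 1 * 2 := by
            apply mul_le_mul _ h2 (Real.sqrt_nonneg _) (by norm_num)
            exact pow_le_one₀ (abs_nonneg t) (abs_le.mpr ⟨ht1, ht2⟩)
        _ = 2 := by norm_num)
  calc A i m ≤ ∫ _ in (-1:ℝ)..1, (2:ℝ) := this
    _ = 4 := by simp; norm_num

-- lower bound for A (i = 0 or 2)
lemma A_lower (i : ℕ) (hi : Even i) (hpt : ∀ t ∈ Set.Icc (1/2:ℝ) (3/4), (1/4:ℝ) ≤ t^i)
    {m : ℝ} (hm2 : 2 ≤ m) : 1/64 ≤ A i m := by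
  have hint : ∀ a b : ℝ, IntervalIntegrable (fun t => t^i * Real.sqrt (qq m t)) volume a b :=
    fun a b => (A_integrand_cont i m).intervalIntegrable _ _
  have hnn : ∀ t : ℝ, 0 ≤ t^i * Real.sqrt (qq m t) :=
    fun t => mul_nonneg (hi.pow_nonneg t) (Real.sqrt_nonneg _)
  have hsplit1 : (∫ t in (-1:ℝ)..(1/2), t^i * Real.sqrt (qq m t))
      + (∫ t in (1/2:ℝ)..1, t^i * Real.sqrt (qq m t)) = A i m :=
    intervalIntegral.integral_add_adjacent_intervals (hint _ _) (hint _ _)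
  have hsplit2 : (∫ t in (1/2:ℝ)..(3/4), t^i * Real.sqrt (qq m t))
      + (∫ t in (3/4:ℝ)..1, t^i * Real.sqrt (qq m t)) = ∫ t in (1/2:ℝ)..1, t^i * Real.sqrt (qq m t) :=
    intervalIntegral.integral_add_adjacent_intervals (hint _ _) (hint _ _)
  have h1 : 0 ≤ ∫ t in (-1:ℝ)..(1/2), t^i * Real.sqrt (qq m t) :=
    intervalIntegral.integral_nonneg (by norm_num) (fun t _ => hnn t)
  have h3 : 0 ≤ ∫ t in (3/4:ℝ)..1, t^i * Real.sqrt (qq m t) :=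
    intervalIntegral.integral_nonneg (by norm_num) (fun t _ => hnn t)
  have h2 : (1/64:ℝ) ≤ ∫ t in (1/2:ℝ)..(3/4), t^i * Real.sqrt (qq m t) := by
    have hmono := intervalIntegral.integral_mono_on (a := (1/2:ℝ)) (b := 3/4) (by norm_num)
      (_root_.intervalIntegrable_const (c := (1/16:ℝ))) (hint _ _)
      (fun t ht => by
        have ht1 : 1/2 ≤ t := ht.1
        have ht2 : t ≤ 3/4 := ht.2
        have hq : (1/16:ℝ) ≤ qq m t := by
          have f1 : (7/16:ℝ) ≤ 1 - t^2 := by nlinarith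
          have f2 : (1/4:ℝ) ≤ m*((1+t^2)/2)-1 := by nlinarith
          unfold qq; nlinarith
        have hsq : (1/4:ℝ) ≤ Real.sqrt (qq m t) := by
          rw [show (1/4:ℝ) = Real.sqrt (1/16) from by
            rw [show (1/16:ℝ) = (1/4)^2 by norm_num, Real.sqrt_sq (by norm_num)]]
          exact Real.sqrt_le_sqrt hq
        calc (1/16:ℝ) = (1/4) * (1/4) := by norm_num
          _ ≤ t^i * Real.sqrt (qq m t) :=
            mul_le_mul (hpt t ht) hsq (by norm_num) (le_trans (by norm_num) (hpt t ht)))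
    calc (1/64:ℝ) = ∫ _ in (1/2:ℝ)..(3/4), (1/16:ℝ) := by simp; norm_num
      _ ≤ _ := hmono
  linarith

lemma dA_nonneg (i : ℕ) (hi : Even i) (m : ℝ) : 0 ≤ dA i m := by
  apply intervalIntegral.integral_nonneg (by norm_num)
  intro t ht
  have : (0:ℝ) ≤ 1 - t^2 := by rcases ht with ⟨h1, h2⟩; nlinarith
  have h1 : (0:ℝ) ≤ 1 / (2 * Real.sqrt (qq m t)) := by positivity
  exact mul_nonneg (hi.pow_nonneg t) (mul_nonneg h1 (by positivity))


lemma dA2_upper {m : ℝ} (hm2 : 2 < m)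
    (hint : IntervalIntegrable
      (fun t : ℝ => t^2 * (1 / (2 * Real.sqrt (qq m t)) * ((1 - t^2) * ((1+t^2)/2))))
      volume (-1) 1) : dA 2 m ≤ 1 := by
  have hmono := intervalIntegral.integral_mono_on (a := (-1:ℝ)) (b := 1) (by norm_num)
    hint (_root_.intervalIntegrable_const (c := (1/2:ℝ)))
    (fun t ht => by
      have ht1 : -1 ≤ t := ht.1
      have ht2 : t ≤ 1 := ht.2
      by_cases ht0 : t = 0
      · simp [ht0]
      by_cases htsq : t^2 = 1
      · have : (1:ℝ) - t^2 = 0 := by rw [htsq]; ring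
        rw [this]; ring_nf; norm_num
      have htlt : t^2 < 1 := lt_of_le_of_ne (by nlinarith) htsq
      have hqpos : 0 < qq m t := by
        apply qq_pos hm2 <;> nlinarith
      set s := Real.sqrt (1 - t^2) with hsdef
      set a := |t| with hadef
      have hs_pos : 0 < s := Real.sqrt_pos.mpr (by nlinarith)
      have hssq : s^2 = 1 - t^2 := Real.sq_sqrt (by nlinarith)
      have hs_le : s ≤ 1 := by nlinarith
      have ha_pos : 0 < a := abs_pos.mpr ht0
      have hasq : a^2 = t^2 := sq_abs t
      have ha_le : a ≤ 1 := by nlinarith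
      have hq2 : t^2 ≤ m * ((1+t^2)/2) - 1 := by nlinarith
      have hsq_ge : s * a ≤ Real.sqrt (qq m t) := by
        rw [hsdef, hadef, ← Real.sqrt_sq_eq_abs, ← Real.sqrt_mul (by nlinarith) (t^2)]
        exact Real.sqrt_le_sqrt (by unfold qq; nlinarith)
      have hle : 1 / (2 * Real.sqrt (qq m t)) ≤ 1 / (2 * (s * a)) :=
        one_div_le_one_div_of_le (by positivity) (by linarith)
      have hYnn : (0:ℝ) ≤ (1 - t^2) * ((1+t^2)/2) := by nlinarith
      calc t^2 * (1 / (2 * Real.sqrt (qq m t)) * ((1 - t^2) * ((1+t^2)/2)))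
          ≤ t^2 * (1 / (2 * (s * a)) * ((1 - t^2) * ((1+t^2)/2))) :=
            mul_le_mul_of_nonneg_left (mul_le_mul_of_nonneg_right hle hYnn) (sq_nonneg t)
        _ = a * (s * ((1+t^2)/4)) := by
            rw [← hssq, ← hasq]; field_simp; ring
        _ ≤ 1/2 := by
            have h7 : a * s ≤ 1 := by nlinarith
            nlinarith)
  calc dA 2 m ≤ ∫ _ in (-1:ℝ)..1, (1/2:ℝ) := hmono
    _ = 1 := by simp; norm_num

set_option maxHeartbeats 2000000 in
lemma dA0_lower {ξ : ℝ} (h2 : 2 < ξ) (hub : ξ ≤ 2 + Real.exp (-20000))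
    (hint : IntervalIntegrable
      (fun t : ℝ => t^0 * (1 / (2 * Real.sqrt (qq ξ t)) * ((1 - t^2) * ((1+t^2)/2))))
      volume (-1) 1) : 1000 ≤ dA 0 ξ := by
  set f : ℝ → ℝ := fun t => t^0 * (1 / (2 * Real.sqrt (qq ξ t)) * ((1 - t^2) * ((1+t^2)/2))) with hf
  set a := Real.sqrt (ξ - 2) with hadef
  have hε_pos : 0 < ξ - 2 := by linarith
  have ha_pos : 0 < a := Real.sqrt_pos.mpr hε_pos
  have hasq : a^2 = ξ - 2 := Real.sq_sqrt hε_pos.le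
  have ha_ub : a ≤ Real.exp (-10000) := by
    have h1 : Real.sqrt (ξ - 2) ≤ Real.sqrt (Real.exp (-20000)) :=
      Real.sqrt_le_sqrt (by linarith)
    have h2' : Real.sqrt (Real.exp (-20000)) = Real.exp (-10000) := by
      rw [show (-20000:ℝ) = -10000 + -10000 by norm_num, Real.exp_add]
      exact Real.sqrt_mul_self (Real.exp_nonneg _)
    rw [hadef]; rw [h2'] at h1; exact h1
  have hexp_half : Real.exp (-10000:ℝ) ≤ 1/2 := by
    have h1 : Real.exp (-10000:ℝ) ≤ Real.exp (-1) := Real.exp_le_exp.mpr (by norm_num)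
    have h2' : Real.exp (-1:ℝ) ≤ 1/2 := by
      rw [Real.exp_neg]
      have := Real.add_one_le_exp (1:ℝ)
      rw [inv_le_comm₀ (Real.exp_pos 1) (by norm_num)]
      linarith
    linarith
  have ha_half : a ≤ 1/2 := le_trans ha_ub hexp_half
  -- integrability on subintervals
  have hsub : ∀ c d : ℝ, c ∈ Set.Icc (-1:ℝ) 1 → d ∈ Set.Icc (-1:ℝ) 1 →
      IntervalIntegrable f volume c d := fun c d hc hd =>
    hint.mono_set (by
      rw [Set.uIcc_subset_uIcc_iff_mem]
      constructor <;> [exact Set.mem_uIcc_of_le hc.1 hc.2; exact Set.mem_uIcc_of_le hd.1 hd.2])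
  have hmem : ∀ x : ℝ, x ∈ Set.Icc (-1:ℝ) 1 → True := fun _ _ => trivial
  have haI : a ∈ Set.Icc (-1:ℝ) 1 := ⟨by linarith, by linarith⟩
  have h1I : (1:ℝ) ∈ Set.Icc (-1:ℝ) 1 := by norm_num
  have hmI : (-1:ℝ) ∈ Set.Icc (-1:ℝ) 1 := by norm_num
  have hhI : (1/2:ℝ) ∈ Set.Icc (-1:ℝ) 1 := by norm_num
  have hnn : ∀ t ∈ Set.Icc (-1:ℝ) 1, 0 ≤ f t := by
    intro t ht
    have : (0:ℝ) ≤ 1 - t^2 := by rcases ht with ⟨u1, u2⟩; nlinarith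
    have h1 : (0:ℝ) ≤ 1 / (2 * Real.sqrt (qq ξ t)) := by positivity
    simp only [hf, pow_zero, one_mul]
    exact mul_nonneg h1 (mul_nonneg this (by positivity))
  have hsplit1 : (∫ t in (-1:ℝ)..a, f t) + (∫ t in a..(1:ℝ), f t) = dA 0 ξ :=
    intervalIntegral.integral_add_adjacent_intervals (hsub _ _ hmI haI) (hsub _ _ haI h1I)
  have hsplit2 : (∫ t in a..(1/2:ℝ), f t) + (∫ t in (1/2:ℝ)..1, f t) = ∫ t in a..(1:ℝ), f t :=
    intervalIntegral.integral_add_adjacent_intervals (hsub _ _ haI hhI) (hsub _ _ hhI h1I)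
  have hflank1 : 0 ≤ ∫ t in (-1:ℝ)..a, f t :=
    intervalIntegral.integral_nonneg (by linarith) (fun t ht => hnn t ⟨ht.1, by rcases ht with ⟨u1,u2⟩; linarith⟩)
  have hflank2 : 0 ≤ ∫ t in (1/2:ℝ)..1, f t :=
    intervalIntegral.integral_nonneg (by norm_num) (fun t ht => hnn t ⟨by rcases ht with ⟨u1,u2⟩; linarith, ht.2⟩)
  -- middle piece
  have hgint : IntervalIntegrable (fun t : ℝ => 1/8 * (1/t)) volume a (1/2) := by
    apply ContinuousOn.intervalIntegrable
    apply ContinuousOn.mul continuousOn_const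
    apply ContinuousOn.div continuousOn_const continuousOn_id
    intro x hx
    rw [Set.uIcc_of_le (by linarith : a ≤ 1/2)] at hx
    have hax := hx.1
    simp only [id_eq]
    intro h0; rw [h0] at hax; linarith
  have hmid_ge : (∫ t in a..(1/2:ℝ), 1/8 * (1/t)) ≤ ∫ t in a..(1/2:ℝ), f t := by
    apply intervalIntegral.integral_mono_on (by linarith) hgint (hsub _ _ haI hhI)
    intro t ht
    have ht1 : a ≤ t := ht.1
    have ht2 : t ≤ 1/2 := ht.2
    have htpos : 0 < t := lt_of_lt_of_le ha_pos ht1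
    have htsq : t^2 ≤ 1/4 := by nlinarith
    have hqpos : 0 < qq ξ t := qq_pos h2 (by linarith) (by linarith)
    have hε_le : ξ - 2 ≤ t^2 := by nlinarith
    have hq_ub : qq ξ t ≤ 2 * t^2 := by
      have hq2nn : (0:ℝ) ≤ ξ * ((1+t^2)/2) - 1 := by nlinarith
      have h1t : (0:ℝ) ≤ 1 - t^2 := by nlinarith
      have : ξ * ((1+t^2)/2) - 1 ≤ 2 * t^2 := by nlinarith
      unfold qq; nlinarith
    have hsq_ub : Real.sqrt (qq ξ t) ≤ 1.5 * t := by
      calc Real.sqrt (qq ξ t) ≤ Real.sqrt (2 * t^2) := Real.sqrt_le_sqrt hq_ub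
        _ = Real.sqrt 2 * t := by
            rw [Real.sqrt_mul (by norm_num), Real.sqrt_sq htpos.le]
        _ ≤ 1.5 * t := mul_le_mul_of_nonneg_right sqrt2_le htpos.le
    have hsqpos : 0 < Real.sqrt (qq ξ t) := Real.sqrt_pos.mpr hqpos
    have hinv : 1 / (3 * t) ≤ 1 / (2 * Real.sqrt (qq ξ t)) :=
      one_div_le_one_div_of_le (by linarith) (by linarith)
    have hY : (3/8:ℝ) ≤ (1 - t^2) * ((1+t^2)/2) := by nlinarith [htsq, sq_nonneg t]
    calc 1/8 * (1/t) = 1/(3*t) * (3/8) := by field_simp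
      _ ≤ 1 / (2 * Real.sqrt (qq ξ t)) * ((1 - t^2) * ((1+t^2)/2)) :=
          mul_le_mul hinv hY (by norm_num) (by positivity)
      _ = f t := by simp [hf]
  have hmid_val : (∫ t in a..(1/2:ℝ), 1/8 * (1/t)) = 1/8 * Real.log ((1/2)/a) := by
    rw [intervalIntegral.integral_const_mul]
    congr 1
    apply integral_one_div
    intro h0
    rw [Set.uIcc_of_le (by linarith : a ≤ 1/2)] at h0
    have := h0.1; linarith
  have hlog : (9999:ℝ) ≤ Real.log ((1/2)/a) := by
    have hlog2 : Real.log 2 ≤ 1 := by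
      have := Real.log_le_sub_one_of_pos (by norm_num : (0:ℝ) < 2)
      linarith
    have h1 : Real.exp (10000:ℝ) / 2 ≤ (1/2)/a := by
      rw [div_le_div_iff₀ (by norm_num) ha_pos]
      have : Real.exp (10000:ℝ) * a ≤ Real.exp 10000 * Real.exp (-10000) :=
        mul_le_mul_of_nonneg_left ha_ub (Real.exp_nonneg _)
      rw [← Real.exp_add] at this
      simp at this
      linarith
    have h2' : Real.log (Real.exp (10000:ℝ) / 2) ≤ Real.log ((1/2)/a) :=
      Real.log_le_log (by positivity) h1
    rw [Real.log_div (by positivity) (by norm_num), Real.log_exp] at h2'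
    linarith
  have : (1000:ℝ) ≤ ∫ t in a..(1/2:ℝ), f t := by
    have := hmid_ge
    rw [hmid_val] at this
    linarith
  linarith
lemma twoh_eq {h : ℝ} (hh : 0 ≤ h) :
    2*h = (1 + Real.sqrt (1+4*h))^2/2 - (1 + Real.sqrt (1+4*h)) := by
  have hs : Real.sqrt (1+4*h)^2 = 1+4*h := Real.sq_sqrt (by linarith)
  nlinarith [hs]

lemma inner_eq {h m t : ℝ} (hm0 : 0 ≤ m) (h2h : 2*h = m^2/2 - m) :
    2*h + (Real.sqrt m * t)^2 - (Real.sqrt m * t)^4/2 = m * qq m t := by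
  have hs : Real.sqrt m ^2 = m := Real.sq_sqrt hm0
  unfold qq
  rw [mul_pow, mul_pow, hs, show Real.sqrt m ^4 = m^2 by
    rw [show 4 = 2*2 from rfl, pow_mul, hs]]
  linear_combination h2h

lemma ellI_eq (i : ℕ) {h : ℝ} (hh : 0 < h) :
    ellI i h = Real.sqrt (1 + Real.sqrt (1+4*h)) *
      ∫ t in (-1:ℝ)..1, (Real.sqrt (1 + Real.sqrt (1+4*h)) * t)^i *
        (Real.sqrt (1 + Real.sqrt (1+4*h)) * Real.sqrt (qq (1 + Real.sqrt (1+4*h)) t)) := by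
  set m := 1 + Real.sqrt (1+4*h) with hmdef
  have hm0 : (0:ℝ) ≤ m := by positivity
  have h2h : 2*h = m^2/2 - m := twoh_eq hh.le
  have key := intervalIntegral.smul_integral_comp_mul_left
    (a := (-1:ℝ)) (b := 1)
    (f := fun x => x^i * Real.sqrt (2*h + x^2 - x^4/2)) (Real.sqrt m)
  have hx : xmax h = Real.sqrt m := rfl
  rw [mul_neg_one, mul_one] at key
  have : ellI i h = Real.sqrt m • ∫ t in (-1:ℝ)..1,
      (Real.sqrt m * t)^i * Real.sqrt (2*h + (Real.sqrt m * t)^2 - (Real.sqrt m * t)^4/2) := by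
    rw [ellI, hx]
    exact key.symm
  rw [this, smul_eq_mul]
  congr 1
  apply intervalIntegral.integral_congr
  intro t _
  simp only
  rw [inner_eq hm0 h2h, Real.sqrt_mul hm0]

lemma ellI0_eq {h : ℝ} (hh : 0 < h) :
    ellI 0 h = (1 + Real.sqrt (1+4*h)) * A 0 (1 + Real.sqrt (1+4*h)) := by
  rw [ellI_eq 0 hh]
  set m := 1 + Real.sqrt (1+4*h) with hmdef
  have hm0 : (0:ℝ) ≤ m := by positivity
  have : (∫ t in (-1:ℝ)..1, (Real.sqrt m * t)^0 * (Real.sqrt m * Real.sqrt (qq m t)))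
      = Real.sqrt m * A 0 m := by
    rw [A, ← intervalIntegral.integral_const_mul]
    apply intervalIntegral.integral_congr
    intro t _
    simp only [pow_zero, one_mul]
  rw [this, ← mul_assoc, Real.mul_self_sqrt hm0]

lemma ellI2_eq {h : ℝ} (hh : 0 < h) :
    ellI 2 h = (1 + Real.sqrt (1+4*h))^2 * A 2 (1 + Real.sqrt (1+4*h)) := by
  rw [ellI_eq 2 hh]
  set m := 1 + Real.sqrt (1+4*h) with hmdef
  have hm0 : (0:ℝ) ≤ m := by positivity
  have hs : Real.sqrt m ^2 = m := Real.sq_sqrt hm0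
  have : (∫ t in (-1:ℝ)..1, (Real.sqrt m * t)^2 * (Real.sqrt m * Real.sqrt (qq m t)))
      = (m * Real.sqrt m) * A 2 m := by
    rw [A, ← intervalIntegral.integral_const_mul]
    apply intervalIntegral.integral_congr
    intro t _
    simp only
    rw [mul_pow]
    rw [hs]
    ring
  rw [this]
  rw [show Real.sqrt m * (m * Real.sqrt m * A 2 m) = (Real.sqrt m * Real.sqrt m) * m * A 2 m by ring,
    Real.mul_self_sqrt hm0]
  ring

set_option maxHeartbeats 2000000 in
/-- At most one zero of the first Melnikov function bifurcates from the figure-eight. -/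
theorem first_melnikov_at_most_one_zero :
    ∃ δ : ℝ, 0 < δ ∧ ∀ l1 l4 : ℝ, (l1, l4) ≠ (0, 0) →
      {h : ℝ | h ∈ Ioo 0 δ ∧ l1 * ellI 0 h + l4 * ellI 2 h = 0}.Subsingleton := by
  set E : ℝ := Real.exp (-20000) with hEdef
  have hEpos : 0 < E := Real.exp_pos _
  have hEle : E ≤ 1 := by
    rw [hEdef, show (1:ℝ) = Real.exp 0 by simp]
    exact Real.exp_le_exp.mpr (by norm_num)
  refine ⟨E/2, by positivity, ?_⟩
  intro l1 l4 hl
  -- facts about the even powers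
  have heven0 : Even 0 := Even.zero
  have heven2 : Even 2 := ⟨1, rfl⟩
  have hpt0 : ∀ t ∈ Set.Icc (1/2:ℝ) (3/4), (1/4:ℝ) ≤ t^(0:ℕ) := by
    intro t _; norm_num
  have hpt2 : ∀ t ∈ Set.Icc (1/2:ℝ) (3/4), (1/4:ℝ) ≤ t^(2:ℕ) := by
    intro t ht; nlinarith [ht.1, ht.2]
  -- the reduced Melnikov function in the variable m
  set φ : ℝ → ℝ := fun m => l1 * A 0 m + l4 * (m * A 2 m) with hφdef
  have hφd : ∀ m : ℝ, 2 < m →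
      HasDerivAt φ (l1 * dA 0 m + l4 * (A 2 m + m * dA 2 m)) m := by
    intro m hm
    have h0 := (hasDerivAt_A 0 hm).1
    have h2 := (hasDerivAt_A 2 hm).1
    have := (h0.const_mul l1).add (((hasDerivAt_id m).mul h2).const_mul l4)
    simpa [hφdef, one_mul, Pi.add_def] using this
  -- membership in the zero set forces `φ (m h) = 0`
  have hmem_phi : ∀ x : ℝ, x ∈ {h : ℝ | h ∈ Ioo 0 (E/2) ∧ l1 * ellI 0 h + l4 * ellI 2 h = 0} →
      2 < 1 + Real.sqrt (1+4*x) ∧ 1 + Real.sqrt (1+4*x) < 2 + E ∧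
        φ (1 + Real.sqrt (1+4*x)) = 0 := by
    intro x hx
    obtain ⟨⟨hx0, hxδ⟩, hxz⟩ := hx
    set m := 1 + Real.sqrt (1+4*x) with hmdef
    have hm2 : 2 < m := by
      have : Real.sqrt 1 < Real.sqrt (1+4*x) := Real.sqrt_lt_sqrt (by norm_num) (by linarith)
      rw [Real.sqrt_one] at this
      rw [hmdef]; linarith
    have hmub : m < 2 + E := by
      have h1 : Real.sqrt (1+4*x) < Real.sqrt ((1+E)^2) :=
        Real.sqrt_lt_sqrt (by linarith) (by nlinarith)
      rw [Real.sqrt_sq (by positivity)] at h1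
      rw [hmdef]; linarith
    refine ⟨hm2, hmub, ?_⟩
    rw [ellI0_eq hx0, ellI2_eq hx0] at hxz
    have hmpos : (0:ℝ) < m := by linarith
    have hz : m * (l1 * A 0 m + l4 * (m * A 2 m)) = 0 := by
      rw [hmdef]; linear_combination hxz
    rcases mul_eq_zero.mp hz with hc | hc
    · exact absurd hc (ne_of_gt hmpos)
    · exact hc
  -- key claim: no two distinct zeros
  have key : ∀ x y : ℝ, x ∈ {h : ℝ | h ∈ Ioo 0 (E/2) ∧ l1 * ellI 0 h + l4 * ellI 2 h = 0} →
      y ∈ {h : ℝ | h ∈ Ioo 0 (E/2) ∧ l1 * ellI 0 h + l4 * ellI 2 h = 0} → x < y → False := by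
    intro x y hx hy hxy
    obtain ⟨hm₁2, hm₁ub, hφ1⟩ := hmem_phi x hx
    obtain ⟨hm₂2, hm₂ub, hφ2⟩ := hmem_phi y hy
    set m₁ := 1 + Real.sqrt (1+4*x) with hm₁def
    set m₂ := 1 + Real.sqrt (1+4*y) with hm₂def
    have hm₁₂ : m₁ < m₂ := by
      have : Real.sqrt (1+4*x) < Real.sqrt (1+4*y) :=
        Real.sqrt_lt_sqrt (by nlinarith [hx.1.1]) (by linarith)
      rw [hm₁def, hm₂def]; linarith
    have hm₁3 : m₁ ≤ 3 := by linarith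
    rcases eq_or_ne l4 0 with h40 | h40
    · -- l4 = 0, so l1 ≠ 0 and φ m₁ = l1 * A 0 m₁ ≠ 0
      have hl1 : l1 ≠ 0 := by
        rintro rfl
        exact hl (by rw [h40])
      have hA0pos : (1/64:ℝ) ≤ A 0 m₁ := A_lower 0 heven0 hpt0 hm₁2.le
      rw [hφdef] at hφ1
      simp only [h40, zero_mul, mul_zero, add_zero] at hφ1
      have : A 0 m₁ = 0 := by
        rcases mul_eq_zero.mp hφ1 with hc | hc
        · exact absurd hc hl1
        · exact hc
      linarith
    · -- l4 ≠ 0: use Rolle's theorem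
      have hcont : ContinuousOn φ (Set.Icc m₁ m₂) := fun z hz =>
        ((hφd z (lt_of_lt_of_le hm₁2 hz.1)).continuousAt).continuousWithinAt
      obtain ⟨ξ, hξmem, hξ0⟩ := exists_hasDerivAt_eq_zero hm₁₂ hcont (by rw [hφ1, hφ2])
        (fun z hz => hφd z (lt_trans hm₁2 hz.1))
      have hξ2 : 2 < ξ := lt_trans hm₁2 hξmem.1
      have hξub : ξ ≤ 2 + E := le_of_lt (lt_trans hξmem.2 hm₂ub)
      have hξ3 : ξ ≤ 3 := by linarith
      -- bounds
      have hA0m₁ub : A 0 m₁ ≤ 4 := A_upper 0 hm₁2.le hm₁3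
      have hA0m₁lb : (1/64:ℝ) ≤ A 0 m₁ := A_lower 0 heven0 hpt0 hm₁2.le
      have hA2m₁lb : (1/64:ℝ) ≤ A 2 m₁ := A_lower 2 heven2 hpt2 hm₁2.le
      have hA2ξub : A 2 ξ ≤ 4 := A_upper 2 hξ2.le hξ3
      have hA2ξlb : (1/64:ℝ) ≤ A 2 ξ := A_lower 2 heven2 hpt2 hξ2.le
      have hdA2ξub : dA 2 ξ ≤ 1 := dA2_upper hξ2 (hasDerivAt_A 2 hξ2).2
      have hdA2ξlb : 0 ≤ dA 2 ξ := dA_nonneg 2 heven2 ξ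
      have hdA0ξlb : (1000:ℝ) ≤ dA 0 ξ := dA0_lower hξ2 hξub (hasDerivAt_A 0 hξ2).2
      -- eliminate l1 and l4
      rw [hφdef] at hφ1
      have heq : l4 * (m₁ * A 2 m₁ * dA 0 ξ) = l4 * ((A 2 ξ + ξ * dA 2 ξ) * A 0 m₁) := by
        linear_combination (dA 0 ξ) * hφ1 - (A 0 m₁) * hξ0
      have heq2 : m₁ * A 2 m₁ * dA 0 ξ = (A 2 ξ + ξ * dA 2 ξ) * A 0 m₁ :=
        mul_left_cancel₀ h40 heq
      have p1 : (1/32:ℝ) ≤ m₁ * A 2 m₁ := by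
        nlinarith [mul_nonneg (by linarith : (0:ℝ) ≤ m₁ - 2) (by linarith : (0:ℝ) ≤ A 2 m₁ - 1/64)]
      have p2 : (31:ℝ) ≤ m₁ * A 2 m₁ * dA 0 ξ := by
        nlinarith [mul_nonneg (by linarith : (0:ℝ) ≤ m₁ * A 2 m₁ - 1/32)
          (by linarith : (0:ℝ) ≤ dA 0 ξ - 1000)]
      have x1 : A 2 ξ + ξ * dA 2 ξ ≤ 7 := by
        nlinarith [mul_le_mul_of_nonneg_left hdA2ξub (by linarith : (0:ℝ) ≤ ξ)]
      have x0 : (0:ℝ) ≤ A 2 ξ + ξ * dA 2 ξ := by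
        have := mul_nonneg (by linarith : (0:ℝ) ≤ ξ) hdA2ξlb
        linarith
      have r1 : (A 2 ξ + ξ * dA 2 ξ) * A 0 m₁ ≤ 28 := by
        calc (A 2 ξ + ξ * dA 2 ξ) * A 0 m₁ ≤ 7 * 4 :=
          mul_le_mul x1 hA0m₁ub (by linarith) (by norm_num)
        _ = 28 := by norm_num
      linarith [heq2, p2, r1]
  intro x hx y hy
  by_contra hne
  rcases lt_or_gt_of_ne hne with h | h
  · exact key x y hx hy h
  · exact key y x hy hx h
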